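/- With L_{n,l}^{α,β} as defined, for all x ∈ [0,1]: L_{n,l}^{α,β}(t²;q;x) = 1/(([n+1]_q+β)²[3]_q) + 2α/(([n+1]_q+β)²[2]_q) + α²/([n+1]_q+β)² + q[n+l]_q((3+4α)+(5+4α)q+4(1+α)q²)/(([n+1]_q+β)²[2]_q[3]_q) · x + q²[n+l]_q[n+l-1]_q(1+q+4q²)/(([n+1]_q+β)²[2]_q[3]_q) · x². -/

import Mathlib

noncomputable section

/-- q-integer [n]_q = (1-q^n)/(1-q). -/
def qInt (q : ℝ) (n : ℕ) : ℝ := (1 - q ^ n) / (1 - q)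

/-- q-factorial [n]_q!. -/
def qFact (q : ℝ) (n : ℕ) : ℝ := ∏ i ∈ Finset.range n, qInt q (i + 1)

/-- q-binomial coefficient. -/
def qBinom (q : ℝ) (n k : ℕ) : ℝ := qFact q n / (qFact q k * qFact q (n - k))

/-- q-analogue (1-x)_q^m = ∏_{j<m} (1 - q^j x). -/
def qPoch (q x : ℝ) (m : ℕ) : ℝ := ∏ j ∈ Finset.range m, (1 - q ^ j * x)

/-- Riemann-type q-integral over [a,b]. -/
def qRInt (q a b : ℝ) (f : ℝ → ℝ) : ℝ :=
  (1 - q) * (b - a) * ∑' s : ℕ, f (a + (b - a) * q ^ s) * q ^ s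

/-- q-Bernstein-Schurer basis function b_{n,l}^k(q;x). -/
def bern (q : ℝ) (n l k : ℕ) (x : ℝ) : ℝ :=
  qBinom q (n + l) k * x ^ k * qPoch q x (n + l - k)

/-- Stancu-type q-Bernstein-Schurer-Kantorovich operator. -/
def Lop (q α β : ℝ) (n l : ℕ) (f : ℝ → ℝ) (x : ℝ) : ℝ :=
  (qInt q (n + 1) + β) * ∑ k ∈ Finset.range (n + l + 1),
    bern q n l k x * (q ^ k)⁻¹ *
      qRInt q ((qInt q k + α) / (qInt q (n + 1) + β))
        ((qInt q (k + 1) + α) / (qInt q (n + 1) + β)) f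

variable {q x : ℝ}

lemma qInt_zero : qInt q 0 = 0 := by simp [qInt]
lemma qFact_zero : qFact q 0 = 1 := by simp [qFact]

lemma qInt_one (h : q ≠ 1) : qInt q 1 = 1 := by
  have h1 : (1:ℝ) - q ≠ 0 := by intro h0; apply h; linarith
  simp [qInt, div_self h1]

lemma qInt_succ (h : q ≠ 1) (k : ℕ) : qInt q (k+1) = qInt q k + q ^ k := by
  have h1 : (1:ℝ) - q ≠ 0 := by intro h0; apply h; linarith
  unfold qInt
  field_simp
  ring

lemma qInt_pos (hq : 0 < q) (hq1 : q < 1) (k : ℕ) : 0 < qInt q (k+1) := by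
  have : q ^ (k+1) < 1 := pow_lt_one₀ (le_of_lt hq) hq1 (Nat.succ_ne_zero k)
  have h1 : (0:ℝ) < 1 - q := by linarith
  exact div_pos (by linarith) h1

lemma qInt_nonneg (hq : 0 < q) (hq1 : q < 1) (k : ℕ) : 0 ≤ qInt q k := by
  cases k with
  | zero => simp [qInt_zero]
  | succ k => exact le_of_lt (qInt_pos hq hq1 k)

lemma qFact_succ (n : ℕ) : qFact q (n+1) = qFact q n * qInt q (n+1) :=
  Finset.prod_range_succ _ _

lemma qFact_pos (hq : 0 < q) (hq1 : q < 1) (n : ℕ) : 0 < qFact q n :=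
  Finset.prod_pos fun i _ => qInt_pos hq hq1 i

lemma qBinom_zero (hq : 0 < q) (hq1 : q < 1) (M : ℕ) : qBinom q M 0 = 1 := by
  have h := (qFact_pos (q := q) hq hq1 M).ne'
  rw [qBinom, qFact_zero, Nat.sub_zero, one_mul, div_self h]

lemma qBinom_self (hq : 0 < q) (hq1 : q < 1) (M : ℕ) : qBinom q M M = 1 := by
  have h := (qFact_pos (q := q) hq hq1 M).ne'
  rw [qBinom, Nat.sub_self, qFact_zero, mul_one, div_self h]

lemma qBinom_pascal (hq : 0 < q) (hq1 : q < 1) (a b : ℕ) :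
    qBinom q (a+b+2) (a+1) = qBinom q (a+b+1) (a+1) + q^(b+1) * qBinom q (a+b+1) a := by
  have hq' : q ≠ 1 := ne_of_lt hq1
  have h1 : (1:ℝ) - q ≠ 0 := by intro h0; apply hq'; linarith
  have e1 : a + b + 2 - (a+1) = b+1 := by omega
  have e2 : a + b + 1 - (a+1) = b := by omega
  have e3 : a + b + 1 - a = b+1 := by omega
  have e4 : a + b + 2 = (a+b+1)+1 := by omega
  rw [qBinom, qBinom, qBinom, e1, e2, e3, e4, qFact_succ (a+b+1)]
  rw [show qFact q (b+1) = qFact q b * qInt q (b+1) from qFact_succ b,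
      show qFact q (a+1) = qFact q a * qInt q (a+1) from qFact_succ a]
  have hM : qInt q (a+b+1+1) = qInt q (b+1) + q^(b+1) * qInt q (a+1) := by
    simp only [qInt]
    field_simp
    ring
  have hfa := (qFact_pos (q := q) hq hq1 a).ne'
  have hfb := (qFact_pos (q := q) hq hq1 b).ne'
  have hia := (qInt_pos (q := q) hq hq1 a).ne'
  have hib := (qInt_pos (q := q) hq hq1 b).ne'
  rw [hM]
  field_simp

lemma qPoch_zero : qPoch q x 0 = 1 := by simp [qPoch]
lemma qPoch_succ (j : ℕ) : qPoch q x (j+1) = qPoch q x j * (1 - q^j * x) :=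
  Finset.prod_range_succ _ _

def Bsum (q x : ℝ) (m : ℕ) (g : ℕ → ℝ) : ℝ :=
  ∑ k ∈ Finset.range (m+1), qBinom q m k * x^k * qPoch q x (m-k) * g k

lemma Bsum_succ (hq : 0 < q) (hq1 : q < 1) (m : ℕ) (g : ℕ → ℝ) :
    Bsum q x (m+1) g
      = Bsum q x m (fun k => (1 - q^(m-k)*x) * g k + q^(m-k)*x * g (k+1)) := by
  rw [Bsum, Bsum]
  have rhs_eq : ∑ k ∈ Finset.range (m+1), qBinom q m k * x^k * qPoch q x (m-k) *
        ((1 - q^(m-k)*x) * g k + q^(m-k)*x * g (k+1))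
      = (∑ k ∈ Finset.range (m+1), qBinom q m k * x^k * qPoch q x (m+1-k) * g k)
        + ∑ k ∈ Finset.range (m+1),
            q^(m-k) * qBinom q m k * x^(k+1) * qPoch q x (m-k) * g (k+1) := by
    rw [← Finset.sum_add_distrib]
    refine Finset.sum_congr rfl fun k hk => ?_
    have hk' : k ≤ m := Nat.lt_succ_iff.mp (Finset.mem_range.mp hk)
    have e : m + 1 - k = (m - k) + 1 := by omega
    rw [e, qPoch_succ]
    ring
  rw [rhs_eq]
  have hL : (∑ k ∈ Finset.range (m+1+1), qBinom q (m+1) k * x^k * qPoch q x (m+1-k) * g k)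
      = (∑ i ∈ Finset.range (m+1),
            qBinom q (m+1) (i+1) * x^(i+1) * qPoch q x (m-i) * g (i+1))
        + qPoch q x (m+1) * g 0 := by
    rw [Finset.sum_range_succ']
    simp [qBinom_zero hq hq1, Nat.add_sub_add_right]
  have hA : (∑ k ∈ Finset.range (m+1), qBinom q m k * x^k * qPoch q x (m+1-k) * g k)
      = (∑ i ∈ Finset.range m,
            qBinom q m (i+1) * x^(i+1) * qPoch q x (m-i) * g (i+1))
        + qPoch q x (m+1) * g 0 := by
    rw [Finset.sum_range_succ']
    congr 1
    · refine Finset.sum_congr rfl fun i _ => ?_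
      have e : m + 1 - (i+1) = m - i := by omega
      rw [e]
    · simp [qBinom_zero hq hq1]
  rw [hL, hA]
  have hmain : (∑ i ∈ Finset.range (m+1),
        qBinom q (m+1) (i+1) * x^(i+1) * qPoch q x (m-i) * g (i+1))
      = (∑ i ∈ Finset.range m, qBinom q m (i+1) * x^(i+1) * qPoch q x (m-i) * g (i+1))
        + ∑ i ∈ Finset.range (m+1),
            q^(m-i) * qBinom q m i * x^(i+1) * qPoch q x (m-i) * g (i+1) := by
    rw [Finset.sum_range_succ, Finset.sum_range_succ (fun i =>
          q^(m-i) * qBinom q m i * x^(i+1) * qPoch q x (m-i) * g (i+1))]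
    have htop : qBinom q (m+1) (m+1) * x^(m+1) * qPoch q x (m-m) * g (m+1)
        = q^(m-m) * qBinom q m m * x^(m+1) * qPoch q x (m-m) * g (m+1) := by
      rw [qBinom_self hq hq1, qBinom_self hq hq1, Nat.sub_self, pow_zero]
      ring
    rw [htop]
    have hsum : ∑ i ∈ Finset.range m,
          qBinom q (m+1) (i+1) * x^(i+1) * qPoch q x (m-i) * g (i+1)
        = ∑ i ∈ Finset.range m, (qBinom q m (i+1) * x^(i+1) * qPoch q x (m-i) * g (i+1)
            + q^(m-i) * qBinom q m i * x^(i+1) * qPoch q x (m-i) * g (i+1)) := by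
      refine Finset.sum_congr rfl fun i hi => ?_
      have hi' : i < m := Finset.mem_range.mp hi
      have hp : qBinom q (m+1) (i+1) = qBinom q m (i+1) + q^(m-i) * qBinom q m i := by
        have h := qBinom_pascal (q := q) hq hq1 i (m-1-i)
        have e1 : i + (m-1-i) + 2 = m+1 := by omega
        have e2 : i + (m-1-i) + 1 = m := by omega
        have e3 : (m-1-i) + 1 = m - i := by omega
        rw [e1, e2, e3] at h
        exact h
      rw [hp]
      ring
    rw [hsum, Finset.sum_add_distrib]
    ring
  rw [hmain]
  ring

lemma Bsum_congr {m : ℕ} {g h : ℕ → ℝ} (H : ∀ k, k ≤ m → g k = h k) :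
    Bsum q x m g = Bsum q x m h :=
  Finset.sum_congr rfl fun k hk => by
    rw [H k (Nat.lt_succ_iff.mp (Finset.mem_range.mp hk))]

lemma Bsum_add {m : ℕ} (g h : ℕ → ℝ) :
    Bsum q x m (fun k => g k + h k) = Bsum q x m g + Bsum q x m h := by
  rw [Bsum, Bsum, Bsum, ← Finset.sum_add_distrib]
  exact Finset.sum_congr rfl fun k _ => by ring

lemma Bsum_mul {m : ℕ} (c : ℝ) (g : ℕ → ℝ) :
    Bsum q x m (fun k => c * g k) = c * Bsum q x m g := by
  rw [Bsum, Bsum, Finset.mul_sum]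
  exact Finset.sum_congr rfl fun k _ => by ring

lemma Bsum_one (hq : 0 < q) (hq1 : q < 1) (m : ℕ) :
    Bsum q x m (fun _ => 1) = 1 := by
  induction m with
  | zero => simp [Bsum, qBinom_zero hq hq1, qPoch_zero]
  | succ m ih =>
    rw [Bsum_succ hq hq1]
    rw [Bsum_congr (h := fun _ => (1:ℝ)) (fun k hk => by ring)]
    exact ih

lemma Bsum_const (hq : 0 < q) (hq1 : q < 1) (c : ℝ) (m : ℕ) :
    Bsum q x m (fun _ => c) = c := by
  have h := Bsum_mul (q := q) (x := x) (m := m) c (fun _ => (1:ℝ))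
  simp only [mul_one] at h
  rw [h, Bsum_one hq hq1, mul_one]

lemma Bsum_qInt (hq : 0 < q) (hq1 : q < 1) (m : ℕ) :
    Bsum q x m (fun k => qInt q k) = qInt q m * x := by
  have hq' : q ≠ 1 := ne_of_lt hq1
  induction m with
  | zero => simp [Bsum, qInt_zero]
  | succ m ih =>
    rw [Bsum_succ hq hq1]
    rw [Bsum_congr (h := fun k => qInt q k + q^m * x) (fun k hk => by
      rw [qInt_succ hq' k]
      have e : q^(m-k) * q^k = q^m := by rw [← pow_add]; congr 1; omega
      linear_combination x * e)]
    rw [Bsum_add (fun k => qInt q k) (fun _ => q^m * x), ih, Bsum_const hq hq1,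
        qInt_succ hq' m]
    ring

lemma Bsum_qInt_sq (hq : 0 < q) (hq1 : q < 1) (m : ℕ) :
    Bsum q x m (fun k => (qInt q k)^2)
      = qInt q m * x + q * qInt q m * qInt q (m-1) * x^2 := by
  have hq' : q ≠ 1 := ne_of_lt hq1
  have h1 : (1:ℝ) - q ≠ 0 := by intro h0; apply hq'; linarith
  induction m with
  | zero => simp [Bsum, qInt_zero]
  | succ m ih =>
    rw [Bsum_succ hq hq1]
    rw [Bsum_congr (h := fun k => (qInt q k)^2 + (q^m * x * (1+q)) * qInt q k + q^m * x)
      (fun k hk => by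
        rw [qInt_succ hq' k]
        have e : q^(m-k) * q^k = q^m := by rw [← pow_add]; congr 1; omega
        have hqk : q^k = 1 - (1-q) * qInt q k := by
          rw [qInt]; field_simp; ring
        linear_combination (2*x*qInt q k + x*q^k) * e + q^m*x*hqk)]
    rw [Bsum_add (fun k => (qInt q k)^2 + (q^m * x * (1+q)) * qInt q k) (fun _ => q^m * x),
        Bsum_add (fun k => (qInt q k)^2) (fun k => (q^m * x * (1+q)) * qInt q k),
        Bsum_mul (q^m * x * (1+q)) (fun k => qInt q k),
        ih, Bsum_qInt hq hq1, Bsum_const hq hq1]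
    have key : q * qInt q m * qInt q (m-1) + q^m * (1+q) * qInt q m
        = q * qInt q (m+1) * qInt q m := by
      cases m with
      | zero => simp [qInt_zero]
      | succ m' =>
        rw [Nat.succ_sub_one]
        simp only [qInt]
        field_simp
        ring
    have hsucc : qInt q (m+1) = qInt q m + q^m := qInt_succ hq' m
    rw [show (m+1) - 1 = m from rfl]
    linear_combination x^2 * key - x * hsucc

lemma qRInt_sq (hq : 0 < q) (hq1 : q < 1) (a c : ℝ) :
    qRInt q a (a + c) (fun t => t^2)
      = c * (a^2 + 2*a*c/(1+q) + c^2/(1+q+q^2)) := by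
  have hq0 : (0:ℝ) ≤ q := le_of_lt hq
  have h2 : q^2 < 1 := by nlinarith
  have h3 : q^3 < 1 := by nlinarith
  have s1 : Summable fun s:ℕ => (q:ℝ)^s := summable_geometric_of_lt_one hq0 hq1
  have s2 : Summable fun s:ℕ => ((q^2:ℝ))^s :=
    summable_geometric_of_lt_one (by positivity) h2
  have s3 : Summable fun s:ℕ => ((q^3:ℝ))^s :=
    summable_geometric_of_lt_one (by positivity) h3
  rw [qRInt]
  have hc : a + c - a = c := by ring
  rw [hc]
  have hfun : ∀ s : ℕ, (fun t => t^2) (a + c * q^s) * q^s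
      = a^2 * q^s + (2*a*c) * (q^2)^s + c^2 * (q^3)^s := by
    intro s
    simp only
    ring
  rw [tsum_congr hfun,
      Summable.tsum_add ((s1.mul_left _).add (s2.mul_left _)) (s3.mul_left _),
      Summable.tsum_add (s1.mul_left _) (s2.mul_left _),
      tsum_mul_left, tsum_mul_left, tsum_mul_left,
      tsum_geometric_of_lt_one hq0 hq1,
      tsum_geometric_of_lt_one (by positivity) h2,
      tsum_geometric_of_lt_one (by positivity) h3]
  have n1 : (1:ℝ) - q ≠ 0 := by nlinarith
  have n2 : (1:ℝ) - q^2 ≠ 0 := by nlinarith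
  have n3 : (1:ℝ) - q^3 ≠ 0 := by nlinarith
  have n4 : (1:ℝ) + q ≠ 0 := by nlinarith
  have n5 : (1:ℝ) + q + q^2 ≠ 0 := by nlinarith
  field_simp
  ring

theorem Lop_sq (q α β : ℝ) (hq : 0 < q) (hq1 : q < 1) (hβ : 0 < β) (hβα : β ≤ α)
    (n l : ℕ) (hnl : 2 ≤ n + l) (x : ℝ) (hx0 : 0 ≤ x) (hx1 : x ≤ 1) :
    Lop q α β n l (fun t => t ^ 2) x =
      1 / ((qInt q (n + 1) + β) ^ 2 * (1 + q + q ^ 2))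
        + 2 * α / ((qInt q (n + 1) + β) ^ 2 * (1 + q))
        + α ^ 2 / (qInt q (n + 1) + β) ^ 2
        + q * qInt q (n + l) * ((3 + 4 * α) + (5 + 4 * α) * q + 4 * (1 + α) * q ^ 2)
            / ((qInt q (n + 1) + β) ^ 2 * (1 + q) * (1 + q + q ^ 2)) * x
        + q ^ 2 * qInt q (n + l) * qInt q (n + l - 1) * (1 + q + 4 * q ^ 2)
            / ((qInt q (n + 1) + β) ^ 2 * (1 + q) * (1 + q + q ^ 2)) * x ^ 2 := by
  have hq' : q ≠ 1 := ne_of_lt hq1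
  have n1 : (1:ℝ) - q ≠ 0 := by nlinarith
  have n4 : (1:ℝ) + q ≠ 0 := by nlinarith
  have n5 : (1:ℝ) + q + q^2 ≠ 0 := by nlinarith
  have hD : 0 < qInt q (n+1) + β := add_pos (qInt_pos hq hq1 n) hβ
  set D := qInt q (n+1) + β with hDdef
  have hDne : D ≠ 0 := ne_of_gt hD
  have hk0 : ∀ k : ℕ, (q:ℝ)^k ≠ 0 := fun k => pow_ne_zero k (ne_of_gt hq)
  have key : ∀ k : ℕ, bern q n l k x * ((q:ℝ)^k)⁻¹ *
      qRInt q ((qInt q k + α)/D) ((qInt q (k+1) + α)/D) (fun t => t^2)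
      = bern q n l k x * (((qInt q k + α)^2 + 2*(qInt q k + α)*q^k/(1+q)
          + (q^k)^2/(1+q+q^2)) / D^3) := by
    intro k
    have hb : (qInt q (k+1) + α)/D = (qInt q k + α)/D + q^k/D := by
      rw [qInt_succ hq' k]; ring
    rw [hb, qRInt_sq hq hq1]
    field_simp
  simp only [Lop]
  rw [Finset.sum_congr rfl (fun k _ => key k)]
  have e2 : ∑ k ∈ Finset.range (n+l+1), bern q n l k x *
        (((qInt q k + α)^2 + 2*(qInt q k + α)*q^k/(1+q) + (q^k)^2/(1+q+q^2)) / D^3)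
      = (Bsum q x (n+l) (fun k => (qInt q k + α)^2 + 2*(qInt q k + α)*q^k/(1+q)
          + (q^k)^2/(1+q+q^2))) / D^3 := by
    rw [Bsum, Finset.sum_div]
    refine Finset.sum_congr rfl fun k _ => ?_
    rw [bern]
    ring
  rw [e2]
  set c0 : ℝ := α^2 + 2*α/(1+q) + 1/(1+q+q^2) with hc0
  set c1 : ℝ := 2*α + 2*(1-(1-q)*α)/(1+q) - 2*(1-q)/(1+q+q^2) with hc1
  set c2 : ℝ := 1 - 2*(1-q)/(1+q) + (1-q)^2/(1+q+q^2) with hc2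
  have e3 : Bsum q x (n+l) (fun k => (qInt q k + α)^2 + 2*(qInt q k + α)*q^k/(1+q)
        + (q^k)^2/(1+q+q^2))
      = Bsum q x (n+l) (fun k => c0 + c1 * qInt q k + c2 * (qInt q k)^2) := by
    refine Bsum_congr fun k hk => ?_
    have hqk : (q:ℝ)^k = 1 - (1-q) * qInt q k := by rw [qInt]; field_simp; ring
    rw [hqk, hc0, hc1, hc2]
    field_simp
    ring
  rw [e3, Bsum_add (fun k => c0 + c1 * qInt q k) (fun k => c2 * (qInt q k)^2),
      Bsum_add (fun _ => c0) (fun k => c1 * qInt q k),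
      Bsum_const hq hq1, Bsum_mul c1 (fun k => qInt q k), Bsum_mul c2 (fun k => (qInt q k)^2),
      Bsum_qInt hq hq1, Bsum_qInt_sq hq hq1]
  rw [hc0, hc1, hc2]
  field_simp
  ring
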